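/- Let Γ₁, Γ₂, Γ₃ ∈ ℂ with Γ₁ + Γ₂ + Γ₃ = 0 and let v, u₁, u₂, u₃ ∈ ℂ be such that v ≠ uᵢ for i = 1, 2, 3 and ∑_{i=1}^{3} Γᵢ/(v − uᵢ) = 0. If ∑_{i=1}^{3} Γᵢ·uᵢ ≠ 0, then v = −(∑_{i=1}^{3} Γᵢ·u_{i−1}·u_{i+1})/(∑_{i=1}^{3} Γᵢ·uᵢ), where the subscripts of u are taken modulo 3 (u₀ = u₃, u₄ = u₁). -/

import Mathlib

theorem stmt4 (Γ u : Fin 3 → ℂ) (v : ℂ)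
    (hΓ : Γ 0 + Γ 1 + Γ 2 = 0)
    (hne : ∀ i : Fin 3, v ≠ u i)
    (heq : ∑ i : Fin 3, Γ i / (v - u i) = 0)
    (hden : ∑ i : Fin 3, Γ i * u i ≠ 0) :
    v = - (∑ i : Fin 3, Γ i * u (i - 1) * u (i + 1)) / (∑ i : Fin 3, Γ i * u i) := by
  have h0 := sub_ne_zero_of_ne (hne 0)
  have h1 := sub_ne_zero_of_ne (hne 1)
  have h2 := sub_ne_zero_of_ne (hne 2)
  simp [Fin.sum_univ_three, Fin.isValue, show ((0:Fin 3)-1) = 2 from rfl,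
    show ((1:Fin 3)-1) = 0 from rfl, show ((2:Fin 3)-1) = 1 from rfl,
    show ((0:Fin 3)+1) = 1 from rfl, show ((1:Fin 3)+1) = 2 from rfl,
    show ((2:Fin 3)+1) = 0 from rfl] at heq hden ⊢
  field_simp at heq
  rw [eq_div_iff hden]
  linear_combination heq - (v^2 - v*(u 0 + u 1 + u 2))*hΓ
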